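/- For all natural numbers k and n, M(k,n+1) = M(k,n)·(k+2), i.e. passing from level n to level n+1 in column k of Moessner's sieve multiplies the value by k+2. -/

import Mathlib

def gAux : ℕ → ℕ → ℕ → ℕ → ℕ
  | 0, i, x, n => i * (n + 2) + x + 1
  | m + 1, i, x, n =>
      (∑ a ∈ Finset.range (x + 1), gAux m i a n) +
        ∑ j ∈ Finset.range i, ∑ a ∈ Finset.range (n + 1 - m), gAux m j a n

def g (i m x n : ℕ) : ℕ := gAux m i x n

def Δ (i n : ℕ) : ℕ := ∑ m ∈ Finset.range (n + 1), ∑ x ∈ Finset.range (n + 1 - m), g i m x n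

def M (k n : ℕ) : ℕ := (k + 1) * (n + 2) + 1 + ∑ i ∈ Finset.range (k + 1), Δ i n

open Finset

lemma hockey (t : ℕ) : ∀ N, ∑ a ∈ range N, (a + t).choose t = (N + t).choose (t + 1)
  | 0 => by simp [Nat.choose_eq_zero_of_lt]
  | N + 1 => by
    rw [sum_range_succ, hockey t N, show N + 1 + t = (N + t) + 1 by ring,
      Nat.choose_succ_succ]
    simp only [Nat.succ_eq_add_one]
    omega

lemma tel (p : ℕ) : ∀ i, ∑ j ∈ range i, ∑ s ∈ range (p + 2), (p + 2).choose s * j ^ s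
    = i ^ (p + 2)
  | 0 => by simp
  | i + 1 => by
    rw [sum_range_succ, tel p i]
    have h := add_pow i 1 (p + 2)
    simp only [one_pow, mul_one, Nat.cast_id] at h
    rw [sum_range_succ] at h
    rw [h, Nat.choose_self, mul_one]
    have e : ∑ s ∈ range (p + 2), (p + 2).choose s * i ^ s
        = ∑ s ∈ range (p + 2), i ^ s * (p + 2).choose s :=
      Finset.sum_congr rfl fun s _ => mul_comm _ _
    rw [e]
    omega

lemma gAux_closed : ∀ m i x n, gAux m i x n
    = ∑ t ∈ range (m + 2), (n + 2).choose (m + 1 - t) * i ^ (m + 1 - t) * (x + t).choose t := by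
  intro m
  induction m with
  | zero =>
    intro i x n
    simp [gAux, Finset.sum_range_succ]
    ring
  | succ m ih =>
    -- sum over a of gAux m i a n, for any upper bound N
    have sum_g : ∀ i n N, ∑ a ∈ range N, gAux m i a n
        = ∑ t ∈ range (m + 2),
            (n + 2).choose (m + 1 - t) * i ^ (m + 1 - t) * ((N + t).choose (t + 1)) := by
      intro i n N
      simp only [ih]
      rw [Finset.sum_comm]
      refine Finset.sum_congr rfl fun t _ => ?_
      rw [← Finset.mul_sum, hockey]
    -- row-sum: sum over full row
    have rowsum : ∀ i n, ∑ a ∈ range (n + 1 - m), gAux m i a n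
        = (n + 2).choose (m + 2) * ∑ s ∈ range (m + 2), (m + 2).choose s * i ^ s := by
      intro i n
      rw [sum_g]
      rcases le_or_gt m n with hmn | hmn
      · rw [Finset.mul_sum]
        have : ∀ t, t ∈ range (m + 2) →
            (n + 2).choose (m + 1 - t) * i ^ (m + 1 - t) * ((n + 1 - m + t).choose (t + 1))
            = (n + 2).choose (m + 2) * ((m + 2).choose (m + 1 - t) * i ^ (m + 1 - t)) := by
          intro t ht
          rw [Finset.mem_range] at ht
          have h1 : (n + 2).choose (m + 2) * (m + 2).choose (m + 1 - t)
              = (n + 2).choose (m + 1 - t) * ((n + 2) - (m + 1 - t)).choose ((m + 2) - (m + 1 - t)) :=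
            Nat.choose_mul (by omega)
          have h2 : (n + 2) - (m + 1 - t) = n + 1 - m + t := by omega
          have h3 : (m + 2) - (m + 1 - t) = t + 1 := by omega
          rw [h2, h3] at h1
          rw [mul_right_comm, ← h1, mul_assoc]
        rw [Finset.sum_congr rfl this]
        -- reflect the sum
        have := Finset.sum_range_reflect (fun s => (n + 2).choose (m + 2) * ((m + 2).choose s * i ^ s)) (m + 2)
        simp only [show ∀ t, m + 2 - 1 - t = m + 1 - t from fun t => by omega] at this
        rw [this]
      · have hz : (n + 2).choose (m + 2) = 0 := Nat.choose_eq_zero_of_lt (by omega)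
        have hz2 : ∀ t, t ∈ range (m + 2) →
            (n + 2).choose (m + 1 - t) * i ^ (m + 1 - t) * ((n + 1 - m + t).choose (t + 1)) = 0 := by
          intro t ht
          rw [Finset.mem_range] at ht
          have : n + 1 - m = 0 := by omega
          rw [this, zero_add, Nat.choose_succ_self, mul_zero]
        rw [Finset.sum_congr rfl hz2, hz]
        simp
    -- column contribution
    have sumA : ∀ i n, ∑ j ∈ range i, ∑ a ∈ range (n + 1 - m), gAux m j a n
        = (n + 2).choose (m + 2) * i ^ (m + 2) := by
      intro i n
      have : ∀ j, j ∈ range i → ∑ a ∈ range (n + 1 - m), gAux m j a n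
          = (n + 2).choose (m + 2) * ∑ s ∈ range (m + 2), (m + 2).choose s * j ^ s :=
        fun j _ => rowsum j n
      rw [Finset.sum_congr rfl this, ← Finset.mul_sum, tel]
    intro i x n
    show (∑ a ∈ Finset.range (x + 1), gAux m i a n) +
        ∑ j ∈ Finset.range i, ∑ a ∈ Finset.range (n + 1 - m), gAux m j a n = _
    rw [sum_g, sumA, Finset.sum_range_succ' _ (m + 2)]
    congr 1
    · refine Finset.sum_congr rfl fun t _ => ?_
      rw [Nat.succ_sub_succ, show x + (t + 1) = x + 1 + t by ring]
    · simp

lemma sum_g' (m i n N : ℕ) : ∑ a ∈ range N, gAux m i a n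
    = ∑ t ∈ range (m + 2), (n + 2).choose (m + 1 - t) * i ^ (m + 1 - t) * ((N + t).choose (t + 1)) := by
  simp only [gAux_closed]
  rw [Finset.sum_comm]
  refine Finset.sum_congr rfl fun t _ => ?_
  rw [← Finset.mul_sum, hockey]

lemma rowsum' (i n m : ℕ) : ∑ x ∈ range (n + 1 - m), gAux m i x n
    = (n + 2).choose (m + 2) * ∑ s ∈ range (m + 2), (m + 2).choose s * i ^ s := by
  rw [sum_g']
  rcases le_or_gt m n with hmn | hmn
  · rw [Finset.mul_sum]
    have h4 : ∀ t, t ∈ range (m + 2) →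
        (n + 2).choose (m + 1 - t) * i ^ (m + 1 - t) * ((n + 1 - m + t).choose (t + 1))
        = (n + 2).choose (m + 2) * ((m + 2).choose (m + 1 - t) * i ^ (m + 1 - t)) := by
      intro t ht
      rw [Finset.mem_range] at ht
      have h1 : (n + 2).choose (m + 2) * (m + 2).choose (m + 1 - t)
          = (n + 2).choose (m + 1 - t) * ((n + 2) - (m + 1 - t)).choose ((m + 2) - (m + 1 - t)) :=
        Nat.choose_mul (by omega)
      have h2 : (n + 2) - (m + 1 - t) = n + 1 - m + t := by omega
      have h3 : (m + 2) - (m + 1 - t) = t + 1 := by omega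
      rw [h2, h3] at h1
      rw [mul_right_comm, ← h1, mul_assoc]
    rw [Finset.sum_congr rfl h4]
    have := Finset.sum_range_reflect (fun s => (n + 2).choose (m + 2) * ((m + 2).choose s * i ^ s)) (m + 2)
    simp only [show ∀ t, m + 2 - 1 - t = m + 1 - t from fun t => by omega] at this
    rw [this]
  · have hz : (n + 2).choose (m + 2) = 0 := Nat.choose_eq_zero_of_lt (by omega)
    have hz2 : ∀ t, t ∈ range (m + 2) →
        (n + 2).choose (m + 1 - t) * i ^ (m + 1 - t) * ((n + 1 - m + t).choose (t + 1)) = 0 := by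
      intro t ht
      have hnm : n + 1 - m = 0 := by omega
      rw [hnm, zero_add, Nat.choose_succ_self, mul_zero]
    rw [Finset.sum_congr rfl hz2, hz]
    simp

lemma binom_int (p : ℕ) (y : ℤ) :
    ∑ s ∈ range (p + 2), ((p + 2).choose s : ℤ) * y ^ s = (y + 1) ^ (p + 2) - y ^ (p + 2) := by
  have h := add_pow y 1 (p + 2)
  simp only [one_pow, mul_one] at h
  rw [sum_range_succ, Nat.choose_self, Nat.cast_one, mul_one] at h
  have e : ∑ s ∈ range (p + 2), ((p + 2).choose s : ℤ) * y ^ s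
      = ∑ s ∈ range (p + 2), y ^ s * ((p + 2).choose s : ℤ) :=
    Finset.sum_congr rfl fun s _ => mul_comm _ _
  rw [e]
  linarith [h]

lemma Hval (n : ℕ) (y : ℤ) :
    ∑ m ∈ range (n + 1), ((n + 2).choose (m + 2) : ℤ) * y ^ (m + 2)
      = (y + 1) ^ (n + 2) - 1 - (n + 2) * y := by
  have h := add_pow y 1 (n + 2)
  simp only [one_pow, mul_one] at h
  rw [sum_range_succ' _ (n + 2), sum_range_succ' _ (n + 1)] at h
  simp only [Nat.choose_zero_right, Nat.choose_one_right, pow_zero, pow_one, Nat.cast_one,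
    mul_one, zero_add] at h
  have e : ∑ m ∈ range (n + 1), ((n + 2).choose (m + 2) : ℤ) * y ^ (m + 2)
      = ∑ k ∈ range (n + 1), y ^ (k + 1 + 1) * ((n + 2).choose (k + 1 + 1) : ℤ) :=
    Finset.sum_congr rfl fun m _ => mul_comm _ _
  rw [e]
  push_cast at h
  linarith [h]

lemma delta_int (i n : ℕ) :
    (Δ i n : ℤ) = ((i : ℤ) + 2) ^ (n + 2) - ((i : ℤ) + 1) ^ (n + 2) - (n + 2) := by
  have : Δ i n = ∑ m ∈ range (n + 1),
      (n + 2).choose (m + 2) * ∑ s ∈ range (m + 2), (m + 2).choose s * i ^ s :=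
    Finset.sum_congr rfl fun m _ => rowsum' i n m
  rw [this]
  push_cast
  have : ∀ m, m ∈ range (n + 1) →
      ((n + 2).choose (m + 2) : ℤ) * ∑ s ∈ range (m + 2), ((m + 2).choose s : ℤ) * (i : ℤ) ^ s
      = ((n + 2).choose (m + 2) : ℤ) * ((i : ℤ) + 1) ^ (m + 2)
        - ((n + 2).choose (m + 2) : ℤ) * (i : ℤ) ^ (m + 2) := by
    intro m _
    rw [binom_int]
    ring
  rw [Finset.sum_congr rfl this, Finset.sum_sub_distrib, Hval, Hval]
  ring

lemma M_closed (k n : ℕ) : M k n = (k + 2) ^ (n + 2) := by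
  have hM : (M k n : ℤ) = ((k : ℤ) + 2) ^ (n + 2) := by
    unfold M
    push_cast
    have this1 : ∀ i, i ∈ range (k + 1) → (Δ i n : ℤ)
        = ((fun j : ℕ => ((j : ℤ) + 1) ^ (n + 2)) (i + 1)
            - (fun j : ℕ => ((j : ℤ) + 1) ^ (n + 2)) i) - (n + 2) := by
      intro i _
      rw [delta_int]
      push_cast
      ring
    rw [Finset.sum_congr rfl this1, Finset.sum_sub_distrib,
      Finset.sum_range_sub (fun j : ℕ => ((j : ℤ) + 1) ^ (n + 2)), Finset.sum_const]
    simp only [Finset.card_range, nsmul_eq_mul]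
    push_cast
    ring
  have : (M k n : ℤ) = (((k + 2) ^ (n + 2) : ℕ) : ℤ) := by rw [hM]; push_cast; ring
  exact_mod_cast this

theorem moessner_level_step (k n : ℕ) : M k (n + 1) = M k n * (k + 2) := by
  rw [M_closed, M_closed]
  ring
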